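/- In the market clearing LP with virtual linking bids, if all inter-storage bid prices S_v are strictly positive and a feasible solution exists, then there exists an optimal solution in which the intra-storage never charges during a time period in which the inter-storage discharges (i.e., there is no t with p^{C,a}_t > 0 and sum_v p^{D,e}_{v,t} > 0). -/
import Mathlib


open Finset

/-- Data of the market-clearing LP with virtual linking bids (VLB), with `nT` time
periods (Δt = 1), `nL` loads, `nG` generators and `nV` stored inter-storage values. -/
structure MarketData (nT nL nG nV : ℕ) where
  /-- load utilities -/
  U : Fin nL → Fin nT → ℝ
  /-- generation costs -/
  C : Fin nG → Fin nT → ℝ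
  /-- inter-storage bid prices (saved charging prices) -/
  S : Fin nV → ℝ
  /-- generation capacities -/
  Pbar : Fin nG → Fin nT → ℝ
  /-- maximum loads -/
  Dbar : Fin nL → Fin nT → ℝ
  /-- initial inter-storage energy for each value -/
  Einit : Fin nV → ℝ
  /-- storage capacity -/
  Ebar : ℝ
  /-- required final storage level -/
  Eend : ℝ

/-- A point (candidate solution) of the VLB market-clearing LP. -/
structure Sol (nT nL nG nV : ℕ) where
  /-- accepted load quantities -/
  d : Fin nL → Fin nT → ℝ
  /-- accepted generation quantities -/
  p : Fin nG → Fin nT → ℝ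
  /-- intra-storage charge (can be negative) -/
  pC : Fin nT → ℝ
  /-- inter-storage discharge for each value -/
  pD : Fin nV → Fin nT → ℝ

variable {nT nL nG nV : ℕ}

/-- Combined storage level at the end of period `t`:
`∑_{i≤t} p^{C,a}_i + ∑_v (E^init_v − ∑_{i≤t} p^{D,e}_{v,i})`. -/
def level (M : MarketData nT nL nG nV) (x : Sol nT nL nG nV) (t : Fin nT) : ℝ :=
  (∑ i ∈ Finset.univ.filter (fun i => i ≤ t), x.pC i)
    + ∑ v, (M.Einit v - ∑ i ∈ Finset.univ.filter (fun i => i ≤ t), x.pD v i)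

/-- Feasibility for the VLB market-clearing LP. -/
def Feasible (M : MarketData nT nL nG nV) (x : Sol nT nL nG nV) : Prop :=
  (∀ t, (∑ l, x.d l t) + x.pC t - (∑ g, x.p g t) - (∑ v, x.pD v t) = 0) ∧
  (∀ g t, 0 ≤ x.p g t ∧ x.p g t ≤ M.Pbar g t) ∧
  (∀ l t, 0 ≤ x.d l t ∧ x.d l t ≤ M.Dbar l t) ∧
  (0 ≤ ∑ i, x.pC i) ∧
  (∀ t, 0 ≤ level M x t ∧ level M x t ≤ M.Ebar) ∧
  (∀ v t, 0 ≤ x.pD v t) ∧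
  (∀ v, ∑ i, x.pD v i ≤ M.Einit v) ∧
  (M.Eend ≤ (∑ i, x.pC i) + ∑ v, (M.Einit v - ∑ i, x.pD v i))

/-- Objective of the VLB market-clearing LP. -/
def Obj (M : MarketData nT nL nG nV) (x : Sol nT nL nG nV) : ℝ :=
  ∑ t, ((∑ l, M.U l t * x.d l t) - (∑ g, M.C g t * x.p g t)
    - ∑ v, M.S v * x.pD v t)

/-- Optimality for the VLB market-clearing LP. -/
def IsOptimal (M : MarketData nT nL nG nV) (x : Sol nT nL nG nV) : Prop :=
  Feasible M x ∧ ∀ y, Feasible M y → Obj M y ≤ Obj M x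


/-! ### Auxiliary machinery -/

/-- Perturbed solution: subtract `a` from `pC` and from `pD v` at time `t`,
add `b` to `pC` and to `pD v` at time `t'`. -/
def tweak (x : Sol nT nL nG nV) (t t' : Fin nT) (v : Fin nV) (a b : ℝ) :
    Sol nT nL nG nV where
  d := x.d
  p := x.p
  pC := fun j => x.pC j - (if j = t then a else 0) + (if j = t' then b else 0)
  pD := fun w j => x.pD w j +
    (if w = v then (-(if j = t then a else 0) + (if j = t' then b else 0)) else 0)

lemma tweak_pC_sum (x : Sol nT nL nG nV) (t t' : Fin nT) (v : Fin nV) (a b : ℝ)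
    (s : Finset (Fin nT)) :
    ∑ j ∈ s, (tweak x t t' v a b).pC j
      = (∑ j ∈ s, x.pC j) - (if t ∈ s then a else 0) + (if t' ∈ s then b else 0) := by
  simp [tweak, Finset.sum_add_distrib, Finset.sum_sub_distrib, Finset.sum_ite_eq']

lemma tweak_pD_sum (x : Sol nT nL nG nV) (t t' : Fin nT) (v : Fin nV) (a b : ℝ)
    (w : Fin nV) (s : Finset (Fin nT)) :
    ∑ j ∈ s, (tweak x t t' v a b).pD w j
      = (∑ j ∈ s, x.pD w j) +
        (if w = v then (-(if t ∈ s then a else 0) + (if t' ∈ s then b else 0)) else 0) := by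
  by_cases hw : w = v <;>
    simp [tweak, hw, Finset.sum_add_distrib, Finset.sum_sub_distrib, Finset.sum_ite_eq',
      sub_eq_add_neg]

lemma tweak_pD_sumv (x : Sol nT nL nG nV) (t t' : Fin nT) (v : Fin nV) (a b : ℝ)
    (j : Fin nT) :
    ∑ w, (tweak x t t' v a b).pD w j
      = (∑ w, x.pD w j) + (-(if j = t then a else 0) + (if j = t' then b else 0)) := by
  simp [tweak, Finset.sum_add_distrib, Finset.sum_ite_eq']

lemma tweak_level (M : MarketData nT nL nG nV) (x : Sol nT nL nG nV)
    (t t' : Fin nT) (v : Fin nV) (a b : ℝ) (i : Fin nT) :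
    level M (tweak x t t' v a b) i = level M x i := by
  unfold level
  rw [tweak_pC_sum]
  have h : ∀ w, M.Einit w - ∑ j ∈ Finset.univ.filter (fun j => j ≤ i),
      (tweak x t t' v a b).pD w j
      = (M.Einit w - ∑ j ∈ Finset.univ.filter (fun j => j ≤ i), x.pD w j)
        - (if w = v then (-(if t ∈ Finset.univ.filter (fun j => j ≤ i) then a else 0)
            + (if t' ∈ Finset.univ.filter (fun j => j ≤ i) then b else 0)) else 0) := by
    intro w; rw [tweak_pD_sum]; ring
  simp only [h, Finset.sum_sub_distrib, Finset.sum_ite_eq', Finset.mem_univ, if_true]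
  ring

lemma tweak_obj (M : MarketData nT nL nG nV) (x : Sol nT nL nG nV)
    (t t' : Fin nT) (v : Fin nV) (a b : ℝ) :
    Obj M (tweak x t t' v a b) = Obj M x + M.S v * a - M.S v * b := by
  have key : ∀ j, (∑ w, M.S w * (tweak x t t' v a b).pD w j)
      = (∑ w, M.S w * x.pD w j)
        + M.S v * (-(if j = t then a else 0) + (if j = t' then b else 0)) := by
    intro j
    simp [tweak, mul_add, Finset.sum_add_distrib, mul_ite, mul_zero, Finset.sum_ite_eq']
  unfold Obj
  have hd : (tweak x t t' v a b).d = x.d := rfl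
  have hp : (tweak x t t' v a b).p = x.p := rfl
  simp only [key, hd, hp]
  have expand : ∀ j : Fin nT,
      ((∑ l, M.U l j * x.d l j) - (∑ g, M.C g j * x.p g j)
        - ((∑ w, M.S w * x.pD w j)
            + M.S v * (-(if j = t then a else 0) + (if j = t' then b else 0))))
      = ((∑ l, M.U l j * x.d l j) - (∑ g, M.C g j * x.p g j) - (∑ w, M.S w * x.pD w j))
        + (M.S v * (if j = t then a else 0) - M.S v * (if j = t' then b else 0)) := by
    intro j; ring
  simp only [expand]
  rw [Finset.sum_add_distrib, Finset.sum_sub_distrib]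
  simp [mul_ite, mul_zero, Finset.sum_ite_eq']
  ring


lemma tweak_stored (M : MarketData nT nL nG nV) (x : Sol nT nL nG nV)
    (t t' : Fin nT) (v : Fin nV) (a b : ℝ) (s : Finset (Fin nT)) :
    ∑ w, (M.Einit w - ∑ j ∈ s, (tweak x t t' v a b).pD w j)
      = (∑ w, (M.Einit w - ∑ j ∈ s, x.pD w j))
        - (-(if t ∈ s then a else 0) + (if t' ∈ s then b else 0)) := by
  have h : ∀ w, M.Einit w - ∑ j ∈ s, (tweak x t t' v a b).pD w j
      = (M.Einit w - ∑ j ∈ s, x.pD w j)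
        - (if w = v then (-(if t ∈ s then a else 0) + (if t' ∈ s then b else 0)) else 0) := by
    intro w; rw [tweak_pD_sum]; ring
  simp only [h, Finset.sum_sub_distrib, Finset.sum_ite_eq', Finset.mem_univ, if_true]

lemma tweak_feasible (M : MarketData nT nL nG nV) {x : Sol nT nL nG nV}
    (hx : Feasible M x) (t t' : Fin nT) (v : Fin nV) {a b : ℝ}
    (hb : 0 ≤ b) (hba : b ≤ a) (haD : a ≤ x.pD v t) (haC : a - b ≤ ∑ j, x.pC j) :
    Feasible M (tweak x t t' v a b) := by
  obtain ⟨h1, h2, h3, h4, h5, h6, h7, h8⟩ := hx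
  refine ⟨?_, h2, h3, ?_, ?_, ?_, ?_, ?_⟩
  · intro j
    have hD := tweak_pD_sumv x t t' v a b j
    have hC : (tweak x t t' v a b).pC j
        = x.pC j - (if j = t then a else 0) + (if j = t' then b else 0) := rfl
    have hdd : (tweak x t t' v a b).d = x.d := rfl
    have hpp : (tweak x t t' v a b).p = x.p := rfl
    simp only [hdd, hpp, hC, hD]
    have := h1 j
    linarith
  · rw [tweak_pC_sum]
    simp only [Finset.mem_univ, if_true]
    linarith
  · intro j; rw [tweak_level]; exact h5 j
  · intro w j
    have h0 := h6 w j
    show 0 ≤ x.pD w j +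
      (if w = v then (-(if j = t then a else 0) + (if j = t' then b else 0)) else 0)
    split_ifs <;> subst_vars <;> linarith
  · intro w
    rw [tweak_pD_sum]
    simp only [Finset.mem_univ, if_true]
    have := h7 w
    split_ifs <;> linarith
  · rw [tweak_pC_sum, tweak_stored]
    simp only [Finset.mem_univ, if_true]
    linarith

abbrev Espace (nT nL nG nV : ℕ) :=
  (Fin nL → Fin nT → ℝ) × (Fin nG → Fin nT → ℝ) × (Fin nT → ℝ) × (Fin nV → Fin nT → ℝ)

def toSol (e : Espace nT nL nG nV) : Sol nT nL nG nV := ⟨e.1, e.2.1, e.2.2.1, e.2.2.2⟩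

lemma contObj (M : MarketData nT nL nG nV) :
    Continuous fun e : Espace nT nL nG nV => Obj M (toSol e) := by
  have h : (fun e : Espace nT nL nG nV => Obj M (toSol e))
      = fun e => ∑ t, ((∑ l, M.U l t * e.1 l t) - (∑ g, M.C g t * e.2.1 g t)
        - ∑ v, M.S v * e.2.2.2 v t) := rfl
  rw [h]; fun_prop

lemma contPhi :
    Continuous fun e : Espace nT nL nG nV => ∑ j, max (e.2.2.1 j) 0 := by fun_prop

lemma isClosed_feas (M : MarketData nT nL nG nV) :
    IsClosed {e : Espace nT nL nG nV | Feasible M (toSol e)} := by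
  simp only [Feasible, level, toSol, Set.setOf_and, Set.setOf_forall]
  refine IsClosed.inter ?_ (IsClosed.inter ?_ (IsClosed.inter ?_ (IsClosed.inter ?_
    (IsClosed.inter ?_ (IsClosed.inter ?_ (IsClosed.inter ?_ ?_))))))
  · exact isClosed_iInter fun t => isClosed_eq (by fun_prop) continuous_const
  · exact isClosed_iInter fun g => isClosed_iInter fun t =>
      (isClosed_le continuous_const (by fun_prop)).inter
        (isClosed_le (by fun_prop) continuous_const)
  · exact isClosed_iInter fun l => isClosed_iInter fun t =>
      (isClosed_le continuous_const (by fun_prop)).inter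
        (isClosed_le (by fun_prop) continuous_const)
  · exact isClosed_le continuous_const (by fun_prop)
  · exact isClosed_iInter fun t =>
      (isClosed_le continuous_const (by fun_prop)).inter
        (isClosed_le (by fun_prop) continuous_const)
  · exact isClosed_iInter fun v => isClosed_iInter fun t =>
      isClosed_le continuous_const (by fun_prop)
  · exact isClosed_iInter fun v => isClosed_le (by fun_prop) continuous_const
  · exact isClosed_le continuous_const (by fun_prop)


set_option maxHeartbeats 1000000 in
lemma exists_good (M : MarketData nT nL nG nV) (hfeas : ∃ x, Feasible M x) :
    ∃ x : Sol nT nL nG nV, IsOptimal M x ∧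
      ∀ y, IsOptimal M y → (∑ j, max (x.pC j) 0) ≤ ∑ j, max (y.pC j) 0 := by
  classical
  obtain ⟨x₀, hx₀⟩ := hfeas
  set S : Set (Espace nT nL nG nV) := {e | Feasible M (toSol e)} with hSdef
  have hSc : IsClosed S := isClosed_feas M
  set Rd : ℝ := ∑ l, ∑ t, |M.Dbar l t| with hRd
  set Rp : ℝ := ∑ g, ∑ t, |M.Pbar g t| with hRp
  set Re : ℝ := ∑ v, |M.Einit v| with hRe
  set Rc : ℝ := nG * Rp + nV * Re + nL * Rd with hRc
  have hRd0 : 0 ≤ Rd := Finset.sum_nonneg fun _ _ => Finset.sum_nonneg fun _ _ => abs_nonneg _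
  have hRp0 : 0 ≤ Rp := Finset.sum_nonneg fun _ _ => Finset.sum_nonneg fun _ _ => abs_nonneg _
  have hRe0 : 0 ≤ Re := Finset.sum_nonneg fun _ _ => abs_nonneg _
  set K : Set (Espace nT nL nG nV) :=
    (Set.univ.pi fun _ => Set.univ.pi fun _ => Set.Icc (-Rd) Rd) ×ˢ
    ((Set.univ.pi fun _ => Set.univ.pi fun _ => Set.Icc (-Rp) Rp) ×ˢ
    ((Set.univ.pi fun _ => Set.Icc (-Rc) Rc) ×ˢ
    (Set.univ.pi fun _ => Set.univ.pi fun _ => Set.Icc (-Re) Re))) with hKdef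
  have hK : IsCompact K :=
    ((isCompact_univ_pi fun _ => isCompact_univ_pi fun _ => isCompact_Icc).prod
      ((isCompact_univ_pi fun _ => isCompact_univ_pi fun _ => isCompact_Icc).prod
        ((isCompact_univ_pi fun _ => isCompact_Icc).prod
          (isCompact_univ_pi fun _ => isCompact_univ_pi fun _ => isCompact_Icc))))
  have hsub : S ⊆ K := by
    rintro e he
    obtain ⟨h1, h2, h3, h4, h5, h6, h7, h8⟩ := he
    have hdB : ∀ l t, 0 ≤ (toSol e).d l t ∧ (toSol e).d l t ≤ Rd := by
      intro l t
      refine ⟨(h3 l t).1, le_trans (h3 l t).2 (le_trans (le_abs_self _) ?_)⟩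
      calc |M.Dbar l t| ≤ ∑ t, |M.Dbar l t| :=
            Finset.single_le_sum (f := fun t => |M.Dbar l t|)
              (fun _ _ => abs_nonneg _) (Finset.mem_univ t)
        _ ≤ Rd := by
            rw [hRd]
            exact Finset.single_le_sum (f := fun l => ∑ t, |M.Dbar l t|)
              (fun _ _ => Finset.sum_nonneg fun _ _ => abs_nonneg _) (Finset.mem_univ l)
    have hpB : ∀ g t, 0 ≤ (toSol e).p g t ∧ (toSol e).p g t ≤ Rp := by
      intro g t
      refine ⟨(h2 g t).1, le_trans (h2 g t).2 (le_trans (le_abs_self _) ?_)⟩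
      calc |M.Pbar g t| ≤ ∑ t, |M.Pbar g t| :=
            Finset.single_le_sum (f := fun t => |M.Pbar g t|)
              (fun _ _ => abs_nonneg _) (Finset.mem_univ t)
        _ ≤ Rp := by
            rw [hRp]
            exact Finset.single_le_sum (f := fun g => ∑ t, |M.Pbar g t|)
              (fun _ _ => Finset.sum_nonneg fun _ _ => abs_nonneg _) (Finset.mem_univ g)
    have hDB : ∀ v t, 0 ≤ (toSol e).pD v t ∧ (toSol e).pD v t ≤ Re := by
      intro v t
      refine ⟨h6 v t, ?_⟩
      calc (toSol e).pD v t ≤ ∑ i, (toSol e).pD v i :=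
            Finset.single_le_sum (fun i _ => h6 v i) (Finset.mem_univ t)
        _ ≤ M.Einit v := h7 v
        _ ≤ |M.Einit v| := le_abs_self _
        _ ≤ Re := by
            rw [hRe]
            exact Finset.single_le_sum (f := fun v => |M.Einit v|)
              (fun _ _ => abs_nonneg _) (Finset.mem_univ v)
    have hCB : ∀ t, -Rc ≤ (toSol e).pC t ∧ (toSol e).pC t ≤ Rc := by
      intro t
      have hbal := h1 t
      have hsd : 0 ≤ ∑ l, (toSol e).d l t := Finset.sum_nonneg fun l _ => (hdB l t).1
      have hsd' : ∑ l, (toSol e).d l t ≤ (nL : ℝ) * Rd := by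
        calc ∑ l, (toSol e).d l t ≤ ∑ _l : Fin nL, Rd :=
              Finset.sum_le_sum fun l _ => (hdB l t).2
          _ = (nL : ℝ) * Rd := by simp [mul_comm]
      have hsp : 0 ≤ ∑ g, (toSol e).p g t := Finset.sum_nonneg fun g _ => (hpB g t).1
      have hsp' : ∑ g, (toSol e).p g t ≤ (nG : ℝ) * Rp := by
        calc ∑ g, (toSol e).p g t ≤ ∑ _g : Fin nG, Rp :=
              Finset.sum_le_sum fun g _ => (hpB g t).2
          _ = (nG : ℝ) * Rp := by simp [mul_comm]
      have hsD : 0 ≤ ∑ v, (toSol e).pD v t := Finset.sum_nonneg fun v _ => (hDB v t).1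
      have hsD' : ∑ v, (toSol e).pD v t ≤ (nV : ℝ) * Re := by
        calc ∑ v, (toSol e).pD v t ≤ ∑ _v : Fin nV, Re :=
              Finset.sum_le_sum fun v _ => (hDB v t).2
          _ = (nV : ℝ) * Re := by simp [mul_comm]
      have hnL : 0 ≤ (nL : ℝ) * Rd := mul_nonneg (Nat.cast_nonneg _) hRd0
      have hnG : 0 ≤ (nG : ℝ) * Rp := mul_nonneg (Nat.cast_nonneg _) hRp0
      have hnV : 0 ≤ (nV : ℝ) * Re := mul_nonneg (Nat.cast_nonneg _) hRe0
      constructor <;> simp only [hRc] <;> nlinarith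
    refine ⟨?_, ?_, ?_, ?_⟩ <;>
      simp only [Set.mem_pi, Set.mem_univ, Set.mem_Icc, forall_true_left]
    · intro l t
      exact ⟨le_trans (by linarith) (hdB l t).1, (hdB l t).2⟩
    · intro g t
      exact ⟨le_trans (by linarith) (hpB g t).1, (hpB g t).2⟩
    · intro t; exact hCB t
    · intro v t
      exact ⟨le_trans (by linarith [hRe0]) (hDB v t).1, (hDB v t).2⟩
  have hScomp : IsCompact S := hK.of_isClosed_subset hSc hsub
  have hSne : S.Nonempty := ⟨(x₀.d, x₀.p, x₀.pC, x₀.pD), hx₀⟩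
  obtain ⟨e₀, he₀S, he₀⟩ := hScomp.exists_isMaxOn hSne (contObj M).continuousOn
  set S' : Set (Espace nT nL nG nV) :=
    S ∩ {e | Obj M (toSol e₀) ≤ Obj M (toSol e)} with hS'def
  have hS'c : IsCompact S' :=
    hScomp.inter_right (isClosed_le continuous_const (contObj M))
  have hS'ne : S'.Nonempty := ⟨e₀, he₀S, show Obj M (toSol e₀) ≤ Obj M (toSol e₀) from le_refl _⟩
  obtain ⟨e₁, he₁S', he₁⟩ := hS'c.exists_isMinOn hS'ne contPhi.continuousOn
  refine ⟨toSol e₁, ⟨he₁S'.1, ?_⟩, ?_⟩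
  · intro y hy
    have h1 : Obj M y ≤ Obj M (toSol e₀) :=
      (isMaxOn_iff.1 he₀) (y.d, y.p, y.pC, y.pD) hy
    exact h1.trans he₁S'.2
  · intro y hy
    have hOpt : Obj M (toSol e₀) ≤ Obj M y := hy.2 (toSol e₀) he₀S
    have hyS' : (y.d, y.p, y.pC, y.pD) ∈ S' := ⟨hy.1, hOpt⟩
    exact (isMinOn_iff.1 he₁) _ hyS'

/-- If all inter-storage bid prices are strictly positive and a feasible
solution exists, then there exists an optimal solution of the VLB market-clearing LP in
which the intra-storage never charges in a period where the inter-storage discharges. -/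
theorem exists_optimal_no_simultaneous_charge_discharge
    (M : MarketData nT nL nG nV)
    (hS : ∀ v, 0 < M.S v) (hfeas : ∃ x, Feasible M x) :
    ∃ x : Sol nT nL nG nV, IsOptimal M x ∧
      ∀ t, ¬ (0 < x.pC t ∧ 0 < ∑ v, x.pD v t) := by
  classical
  obtain ⟨x, hopt, hmin⟩ := exists_good M hfeas
  refine ⟨x, hopt, ?_⟩
  rintro t ⟨hCt, hDt⟩
  obtain ⟨hfe, hmax⟩ := hopt
  have hfe' := hfe
  obtain ⟨h1, h2, h3, h4, h5, h6, h7, h8⟩ := hfe'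
  obtain ⟨v, hv⟩ : ∃ v, 0 < x.pD v t := by
    by_contra h
    push_neg at h
    have : ∑ v, x.pD v t ≤ 0 := Finset.sum_nonpos fun v _ => h v
    linarith
  rcases eq_or_lt_of_le h4 with hsum0 | hsumpos
  · -- total intra charge is zero: exchange move preserving objective, decreasing Φ
    obtain ⟨t', ht'mem, ht'⟩ : ∃ t' ∈ Finset.univ.erase t, x.pC t' < 0 := by
      by_contra h
      push_neg at h
      have hnn : 0 ≤ ∑ j ∈ Finset.univ.erase t, x.pC j :=
        Finset.sum_nonneg fun j hj => h j hj
      have he : ∑ j ∈ Finset.univ.erase t, x.pC j = (∑ j, x.pC j) - x.pC t :=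
        Finset.sum_erase_eq_sub (Finset.mem_univ t)
      rw [he, ← hsum0] at hnn
      linarith
    have htne : t' ≠ t := Finset.ne_of_mem_erase ht'mem
    set ε : ℝ := min (x.pC t) (min (x.pD v t) (-x.pC t')) with hεdef
    have hε0 : 0 < ε := lt_min hCt (lt_min hv (by linarith))
    have hε1 : ε ≤ x.pC t := min_le_left _ _
    have hε2 : ε ≤ x.pD v t := le_trans (min_le_right _ _) (min_le_left _ _)
    have hε3 : ε ≤ -x.pC t' := le_trans (min_le_right _ _) (min_le_right _ _)
    set y := tweak x t t' v ε ε with hydef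
    have hyfeas : Feasible M y :=
      tweak_feasible M hfe t t' v (le_of_lt hε0) (le_refl _) hε2 (by linarith)
    have hyobj : Obj M y = Obj M x := by rw [hydef, tweak_obj]; ring
    have hyopt : IsOptimal M y := ⟨hyfeas, fun z hz => hyobj ▸ hmax z hz⟩
    have hΦle := hmin y hyopt
    have hΦ : (∑ j, max (y.pC j) 0) = (∑ j, max (x.pC j) 0) - ε := by
      have hpt : ∀ j : Fin nT, max (y.pC j) 0
          = max (x.pC j) 0 + (if j = t then -ε else 0) := by
        intro j
        have hy : y.pC j = x.pC j - (if j = t then ε else 0) + (if j = t' then ε else 0) := rfl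
        rcases eq_or_ne j t with rfl | hjt
        · have hne : j ≠ t' := fun h => htne (h ▸ rfl)
          have e1 : (if j = j then ε else 0) = ε := if_pos rfl
          have e2 : (if j = t' then ε else 0) = 0 := if_neg hne
          have e3 : (if j = j then -ε else 0) = -ε := if_pos rfl
          rw [hy, e1, e2, e3, add_zero, max_eq_left (by linarith),
            max_eq_left (by linarith)]
          ring
        · rcases eq_or_ne j t' with rfl | hjt'
          · have e1 : (if j = t then ε else 0) = 0 := if_neg hjt
            have e2 : (if j = j then ε else 0) = ε := if_pos rfl
            have e3 : (if j = t then -ε else 0) = 0 := if_neg hjt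
            rw [hy, e1, e2, e3, sub_zero, add_zero, max_eq_right (by linarith),
              max_eq_right (by linarith)]
          · rw [hy]
            simp [hjt, hjt']
      rw [Finset.sum_congr rfl fun j _ => hpt j, Finset.sum_add_distrib]
      simp [Finset.sum_ite_eq']
      ring
    rw [hΦ] at hΦle
    linarith
  · -- total intra charge positive: strictly improving move, contradiction
    set ε : ℝ := min (x.pC t) (min (x.pD v t) (∑ j, x.pC j)) with hεdef
    have hε0 : 0 < ε := lt_min hCt (lt_min hv hsumpos)
    have hε2 : ε ≤ x.pD v t := le_trans (min_le_right _ _) (min_le_left _ _)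
    have hε3 : ε ≤ ∑ j, x.pC j := le_trans (min_le_right _ _) (min_le_right _ _)
    set y := tweak x t t v ε 0 with hydef
    have hyfeas : Feasible M y :=
      tweak_feasible M hfe t t v (le_refl 0) (le_of_lt hε0) hε2 (by linarith)
    have hyobj : Obj M y = Obj M x + M.S v * ε := by rw [hydef, tweak_obj]; ring
    have hle := hmax y hyfeas
    have hpos : 0 < M.S v * ε := mul_pos (hS v) hε0
    rw [hyobj] at hle
    linarith
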